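/- For θ > 1 and any integer k ≥ 2, φ_θ(k) ≤ ((2θ−2)/(2θ−1))^{2θ−2} − ((2θ−2)/(2θ−1))^{2θ−1}. -/

import Mathlib

open Real Finset

lemma amgm_aux {p x : ℝ} (hp : 0 < p) (hx0 : 0 ≤ x) (hx1 : x ≤ 1) :
    x ^ p * (1 - x) ≤ (p / (p + 1)) ^ p * (1 - p / (p + 1)) := by
  have hp1 : (0:ℝ) < p + 1 := by linarith
  have hc : 0 < p / (p + 1) := by positivity
  have hc1 : p / (p + 1) < 1 := by rw [div_lt_one hp1]; linarith
  have hcp : 0 < (p / (p + 1)) ^ p := rpow_pos_of_pos hc p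
  rcases eq_or_lt_of_le hx0 with h0 | hx0'
  · rw [← h0, Real.zero_rpow hp.ne', zero_mul]
    exact mul_nonneg hcp.le (by linarith)
  have hp₁ : 0 ≤ x * ((p + 1) / p) := by positivity
  have hp₂ : 0 ≤ (1 - x) * (p + 1) := by nlinarith
  have hw : p / (p + 1) + 1 / (p + 1) = 1 := by field_simp
  have h := Real.geom_mean_le_arith_mean2_weighted (le_of_lt hc) (by positivity)
      hp₁ hp₂ hw
  have harith : p / (p + 1) * (x * ((p + 1) / p)) + 1 / (p + 1) * ((1 - x) * (p + 1)) = 1 := by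
    field_simp; ring
  rw [harith] at h
  have h2 : ((x * ((p + 1) / p)) ^ (p / (p + 1)) * ((1 - x) * (p + 1)) ^ (1 / (p + 1))) ^ (p + 1)
      ≤ 1 := by
    have := Real.rpow_le_rpow (by positivity) h (le_of_lt hp1)
    rwa [Real.one_rpow] at this
  rw [Real.mul_rpow (by positivity) (by positivity), ← Real.rpow_mul hp₁, ← Real.rpow_mul hp₂,
    div_mul_cancel₀ _ hp1.ne', div_mul_cancel₀ _ hp1.ne', Real.rpow_one] at h2
  -- h2 : (x * ((p+1)/p)) ^ p * ((1-x)*(p+1)) ≤ 1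
  rw [Real.mul_rpow hx0 (by positivity)] at h2
  have hinv : ((p + 1) / p) ^ p = ((p / (p + 1)) ^ p)⁻¹ := by
    rw [← Real.inv_rpow (le_of_lt hc), inv_div]
  rw [hinv] at h2
  have hgoal : x ^ p * (1 - x)
      = (x ^ p * ((p / (p + 1)) ^ p)⁻¹ * ((1 - x) * (p + 1))) * ((p / (p + 1)) ^ p * (1 / (p + 1))) := by
    field_simp
  rw [hgoal]
  calc (x ^ p * ((p / (p + 1)) ^ p)⁻¹ * ((1 - x) * (p + 1))) * ((p / (p + 1)) ^ p * (1 / (p + 1)))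
      ≤ 1 * ((p / (p + 1)) ^ p * (1 / (p + 1))) := by
        apply mul_le_mul_of_nonneg_right h2 (by positivity)
    _ = (p / (p + 1)) ^ p * (1 - p / (p + 1)) := by
        rw [one_mul]
        congr 1
        field_simp
        ring

lemma single_bound (θ : ℝ) (hθ : 1 < θ) {k : ℕ} (a : Fin k → ℝ)
    (ha0 : ∀ i, 0 ≤ a i) (hsum : ∑ i, a i = 1) :
    ∑ i : Fin k, ∑ j : Fin k, (if i ≠ j then a i ^ θ * a j ^ θ else 0) ≤
      ((2 * θ - 2) / (2 * θ - 1)) ^ (2 * θ - 2) -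
        ((2 * θ - 2) / (2 * θ - 1)) ^ (2 * θ - 1) := by
  have h2θ1 : (0:ℝ) < 2 * θ - 1 := by linarith
  have h2θ2 : (0:ℝ) < 2 * θ - 2 := by linarith
  set c : ℝ := (2 * θ - 2) / (2 * θ - 1) with hc_def
  have hc : 0 < c := by positivity
  have hc1 : c < 1 := by rw [hc_def, div_lt_one h2θ1]; linarith
  have hRHS : c ^ (2 * θ - 2) - c ^ (2 * θ - 1) = c ^ (2 * θ - 2) * (1 - c) := by
    have h : c ^ (2 * θ - 1) = c ^ (2 * θ - 2) * c := by
      rw [show (2 * θ - 1) = (2 * θ - 2) + 1 by ring, Real.rpow_add hc, Real.rpow_one]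
    rw [h]; ring
  have hRHSnn : 0 ≤ c ^ (2 * θ - 2) * (1 - c) :=
    mul_nonneg (Real.rpow_nonneg hc.le _) (by linarith)
  set b : Fin k → ℝ := fun i => a i ^ θ with hb_def
  have hb0 : ∀ i, 0 ≤ b i := fun i => Real.rpow_nonneg (ha0 i) θ
  set t : ℝ := ∑ i, b i with ht_def
  set Q : ℝ := ∑ i, b i * b i with hQ_def
  have ht0 : 0 ≤ t := Finset.sum_nonneg fun i _ => hb0 i
  have hQ0 : 0 ≤ Q := Finset.sum_nonneg fun i _ => mul_nonneg (hb0 i) (hb0 i)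
  -- Step A : the double sum equals t*t - Q
  have hS : ∑ i : Fin k, ∑ j : Fin k, (if i ≠ j then a i ^ θ * a j ^ θ else 0)
      = t * t - Q := by
    have hrow : ∀ i : Fin k, ∑ j : Fin k, (if i ≠ j then b i * b j else 0)
        = b i * t - b i * b i := by
      intro i
      calc ∑ j : Fin k, (if i ≠ j then b i * b j else 0)
          = ∑ j : Fin k, (b i * b j - if i = j then b i * b j else 0) := by
            apply Finset.sum_congr rfl
            intro j _
            by_cases h : i = j <;> simp [h]
        _ = (∑ j : Fin k, b i * b j) - ∑ j : Fin k, (if i = j then b i * b j else 0) := by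
            rw [Finset.sum_sub_distrib]
        _ = b i * t - b i * b i := by
            rw [Finset.sum_ite_eq, ← Finset.mul_sum]
            simp [ht_def]
    calc ∑ i : Fin k, ∑ j : Fin k, (if i ≠ j then a i ^ θ * a j ^ θ else 0)
        = ∑ i : Fin k, (b i * t - b i * b i) := Finset.sum_congr rfl fun i _ => hrow i
      _ = t * t - Q := by rw [Finset.sum_sub_distrib, ← Finset.sum_mul]
  rw [hS, hRHS]
  rcases eq_or_lt_of_le ht0 with ht | ht
  · nlinarith
  -- main case t > 0
  have ha1 : ∀ i, a i ≤ 1 := by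
    intro i
    rw [← hsum]
    exact Finset.single_le_sum (fun j _ => ha0 j) (Finset.mem_univ i)
  have ht1 : t ≤ 1 := by
    rw [ht_def, ← hsum]
    apply Finset.sum_le_sum
    intro i _
    calc a i ^ θ ≤ a i ^ (1:ℝ) :=
          Real.rpow_le_rpow_of_exponent_ge' (ha0 i) (ha1 i) (by norm_num) hθ.le
      _ = a i := Real.rpow_one _
  have hQpos : 0 < Q := by
    obtain ⟨i₀, -, hbi⟩ := Finset.exists_lt_of_sum_lt
      (show ∑ _i : Fin k, (0:ℝ) < ∑ i, b i by simpa using ht)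
    exact lt_of_lt_of_le (mul_pos hbi hbi)
      (Finset.single_le_sum (fun j _ => mul_nonneg (hb0 j) (hb0 j)) (Finset.mem_univ i₀))
  set lam : ℝ := (θ - 1) / (2 * θ - 1) with hlam_def
  have hθ1 : (0:ℝ) < θ - 1 := by linarith
  have hlam : 0 < lam := by positivity
  have hlam1 : lam < 1 := by rw [hlam_def, div_lt_one h2θ1]; linarith
  have hQl : 0 < Q ^ lam := Real.rpow_pos_of_pos hQpos lam
  -- termwise Hölder via AM-GM
  have hkey : ∀ i, b i / Q ^ lam ≤ lam * (b i * b i / Q) + (1 - lam) * a i := by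
    intro i
    have h := Real.geom_mean_le_arith_mean2_weighted (w₁ := lam) (w₂ := 1 - lam)
      (p₁ := b i * b i / Q) (p₂ := a i) hlam.le (by linarith)
      (div_nonneg (mul_nonneg (hb0 i) (hb0 i)) hQ0) (ha0 i) (by ring)
    have hnum : (b i * b i) ^ lam * a i ^ (1 - lam) = b i := by
      have hbb : b i * b i = a i ^ (2 * θ) := by
        rw [hb_def]
        dsimp only
        rw [show (2 * θ) = θ + θ by ring, Real.rpow_add' (ha0 i) (by positivity)]
      have hexp : 2 * θ * lam + (1 - lam) = θ := by rw [hlam_def]; field_simp; ring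
      rw [hbb, ← Real.rpow_mul (ha0 i),
        ← Real.rpow_add' (ha0 i) (by rw [hexp]; intro hh; linarith), hexp]
    have hlhs : (b i * b i / Q) ^ lam * a i ^ (1 - lam) = b i / Q ^ lam := by
      rw [Real.div_rpow (mul_nonneg (hb0 i) (hb0 i)) hQ0, div_mul_eq_mul_div, hnum]
    rwa [hlhs] at h
  have hsum2 : t / Q ^ lam ≤ 1 := by
    have h1 : ∑ i, (b i / Q ^ lam) ≤ ∑ i, (lam * (b i * b i / Q) + (1 - lam) * a i) :=
      Finset.sum_le_sum fun i _ => hkey i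
    rw [← Finset.sum_div] at h1
    have h2 : ∑ i, (lam * (b i * b i / Q) + (1 - lam) * a i) = 1 := by
      rw [Finset.sum_add_distrib, ← Finset.mul_sum, ← Finset.mul_sum, ← Finset.sum_div,
        ← hQ_def, div_self hQpos.ne', hsum]
      ring
    rw [h2] at h1
    exact h1
  have ht_le : t ≤ Q ^ lam := (div_le_one hQl).mp hsum2
  have hQge : t ^ (1 / lam) ≤ Q := by
    have h := Real.rpow_le_rpow ht0 ht_le (by positivity : (0:ℝ) ≤ 1 / lam)
    rwa [← Real.rpow_mul hQ0, mul_one_div, div_self hlam.ne', Real.rpow_one] at h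
  set x : ℝ := t ^ (θ - 1)⁻¹ with hx_def
  have hx0 : 0 < x := Real.rpow_pos_of_pos ht _
  have hx1 : x ≤ 1 := Real.rpow_le_one ht0 ht1 (by positivity)
  have htx : x ^ (θ - 1) = t := Real.rpow_inv_rpow ht0 hθ1.ne'
  have htt : t * t = x ^ (2 * θ - 2) := by
    rw [← htx, ← Real.rpow_add hx0]
    congr 1
    ring
  have htr : t ^ (1 / lam) = x ^ (2 * θ - 1) := by
    rw [← htx, ← Real.rpow_mul hx0.le]
    congr 1
    rw [hlam_def]
    field_simp
  calc t * t - Q ≤ t * t - t ^ (1 / lam) := by linarith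
    _ = x ^ (2 * θ - 2) - x ^ (2 * θ - 1) := by rw [htt, htr]
    _ = x ^ (2 * θ - 2) * (1 - x) := by
        rw [show (2 * θ - 1) = (2 * θ - 2) + 1 by ring, Real.rpow_add hx0, Real.rpow_one]
        ring
    _ ≤ c ^ (2 * θ - 2) * (1 - c) := by
        have h := amgm_aux (p := 2 * θ - 2) h2θ2 hx0.le hx1
        rw [show (2 * θ - 2) + 1 = 2 * θ - 1 by ring, ← hc_def] at h
        exact h

/-- `φ_θ(k) = sup { ∑_{i ≠ j} |v i|^θ |v j|^θ : v ∈ ℝ^k, ‖v‖₁ = 1 }`. -/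
noncomputable def phiVar (θ : ℝ) (k : ℕ) : ℝ :=
  ⨆ v : {v : Fin k → ℝ // ∑ i, |v i| = 1},
    ∑ i : Fin k, ∑ j : Fin k, if i ≠ j then |v.1 i| ^ θ * |v.1 j| ^ θ else 0

/-- For `θ > 1` and `k ≥ 2`,
`φ_θ(k) ≤ ((2θ−2)/(2θ−1))^{2θ−2} − ((2θ−2)/(2θ−1))^{2θ−1}`. -/
theorem phiVar_general_bound (θ : ℝ) (hθ : 1 < θ) (k : ℕ) (hk : 2 ≤ k) :
    phiVar θ k ≤
      ((2 * θ - 2) / (2 * θ - 1)) ^ (2 * θ - 2) -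
        ((2 * θ - 2) / (2 * θ - 1)) ^ (2 * θ - 1) := by
  have hne : Nonempty {v : Fin k → ℝ // ∑ i, |v i| = 1} := by
    refine ⟨⟨fun i => if i = (⟨0, by omega⟩ : Fin k) then 1 else 0, ?_⟩⟩
    simp only [apply_ite abs, abs_one, abs_zero]
    rw [Finset.sum_ite_eq']
    simp
  rw [phiVar]
  apply ciSup_le
  intro v
  exact single_bound θ hθ (fun i => |v.1 i|) (fun i => abs_nonneg _) v.2
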